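/- For any matrix X ∈ ℝ^{m₁×m₂}, the nuclear norm satisfies ‖X‖_* = min over all factorizations X = UVᵀ (U ∈ ℝ^{m₁×R}, V ∈ ℝ^{m₂×R}, any R ≥ rank(X)) of (1/2)(‖U‖_F² + ‖V‖_F²). -/

import Mathlib

open Matrix

/-- The nuclear norm of a real matrix: the sum of its singular values, i.e. the sum of
the square roots of the eigenvalues of `Xᴴ * X`. -/
noncomputable def nuclearNorm {m₁ m₂ : ℕ} (X : Matrix (Fin m₁) (Fin m₂) ℝ) : ℝ :=
  ∑ i, Real.sqrt ((Matrix.isHermitian_conjTranspose_mul_self X).eigenvalues i)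

section aux
variable {p q : ℕ}

lemma traceAux (A B : Matrix (Fin p) (Fin q) ℝ) :
    (Aᵀ * B).trace = ∑ i, ∑ j, A i j * B i j := by
  rw [Finset.sum_comm]
  simp [Matrix.trace, Matrix.diag, Matrix.mul_apply]

lemma traceSq (A : Matrix (Fin p) (Fin q) ℝ) :
    (Aᵀ * A).trace = ∑ i, ∑ j, A i j ^ 2 := by
  simp [traceAux, sq]

lemma traceSqNonneg (A : Matrix (Fin p) (Fin q) ℝ) : 0 ≤ (Aᵀ * A).trace := by
  rw [traceSq]; positivity

end aux

theorem stmt_6 {m₁ m₂ : ℕ} (X : Matrix (Fin m₁) (Fin m₂) ℝ) :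
    IsLeast {c : ℝ | ∃ (R : ℕ) (U : Matrix (Fin m₁) (Fin R) ℝ) (V : Matrix (Fin m₂) (Fin R) ℝ),
        X.rank ≤ R ∧ X = U * Vᵀ ∧
        c = (1 / 2) * ((∑ i, ∑ r, U i r ^ 2) + ∑ j, ∑ r, V j r ^ 2)}
      (nuclearNorm X) := by
  have h := Matrix.isHermitian_conjTranspose_mul_self X
  set μ := h.eigenvalues with hμdef
  set W : Matrix (Fin m₂) (Fin m₂) ℝ := (h.eigenvectorUnitary : Matrix (Fin m₂) (Fin m₂) ℝ)
    with hWdef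
  have hst : star W = Wᵀ := by
    rw [Matrix.star_eq_conjTranspose, Matrix.conjTranspose_eq_transpose_of_trivial]
  have hW1 : Wᵀ * W = 1 := by
    have := Matrix.mem_unitaryGroup_iff'.mp h.eigenvectorUnitary.2
    rw [← hst]; exact this
  have hW2 : W * Wᵀ = 1 := by
    have := Matrix.mem_unitaryGroup_iff.mp h.eigenvectorUnitary.2
    rw [← hst]; exact this
  have hspec : Xᵀ * X = W * Matrix.diagonal μ * Wᵀ := by
    have := h.spectral_theorem
    rw [← hst, ← Matrix.conjTranspose_eq_transpose_of_trivial X, this]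
    rfl
  have key : (X * W)ᵀ * (X * W) = Matrix.diagonal μ := by
    calc (X * W)ᵀ * (X * W) = Wᵀ * (Xᵀ * X) * W := by
          rw [Matrix.transpose_mul]; simp only [Matrix.mul_assoc]
      _ = (Wᵀ * W) * Matrix.diagonal μ * (Wᵀ * W) := by rw [hspec]; simp only [Matrix.mul_assoc]
      _ = Matrix.diagonal μ := by rw [hW1]; simp
  have hμ0 : ∀ i, 0 ≤ μ i := fun i =>
    (Matrix.posSemidef_conjTranspose_mul_self X).eigenvalues_nonneg i
  set s : Fin m₂ → ℝ := fun i => Real.sqrt (μ i) with hsdef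
  have hs0 : ∀ i, 0 ≤ s i := fun i => Real.sqrt_nonneg _
  have hssq : ∀ i, s i ^ 2 = μ i := fun i => Real.sq_sqrt (hμ0 i)
  have hnn : nuclearNorm X = ∑ i, s i := rfl
  have colnorm : ∀ r, ∑ k, (X * W) k r ^ 2 = μ r := by
    intro r
    have h1 : ∑ k, (X * W)ᵀ r k * (X * W) k r = μ r := by
      rw [← Matrix.mul_apply, key, Matrix.diagonal_apply_eq]
    simpa [Matrix.transpose_apply, sq] using h1
  have colzero : ∀ r, μ r = 0 → ∀ k, (X * W) k r = 0 := by
    intro r hr k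
    have h0 : ∑ k, (X * W) k r ^ 2 = 0 := by rw [colnorm r, hr]
    have := (Finset.sum_eq_zero_iff_of_nonneg (fun k _ => sq_nonneg ((X * W) k r))).mp h0 k
      (Finset.mem_univ k)
    exact (pow_eq_zero_iff two_ne_zero).mp this
  constructor
  · -- membership: explicit factorization from the spectral decomposition
    set g : Fin m₂ → ℝ := fun i => if μ i = 0 then 0 else (Real.sqrt (s i))⁻¹ with hgdef
    refine ⟨m₂, (X * W) * Matrix.diagonal g,
      W * Matrix.diagonal (fun i => Real.sqrt (s i)), Matrix.rank_le_width X, ?_, ?_⟩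
    · -- factorization
      have hd : Matrix.diagonal g * Matrix.diagonal (fun i => Real.sqrt (s i)) =
          Matrix.diagonal (fun i => if μ i = 0 then (0 : ℝ) else 1) := by
        rw [Matrix.diagonal_mul_diagonal]
        have hfun : (fun i => g i * Real.sqrt (s i)) =
            (fun i => if μ i = 0 then (0 : ℝ) else 1) := by
          funext i
          by_cases hi : μ i = 0
          · simp [hgdef, hi]
          · have hsne : s i ≠ 0 := by
              intro hc
              apply hi; rw [← hssq i, hc]; ring
            have hne : Real.sqrt (s i) ≠ 0 := by
              simpa [Real.sqrt_eq_zero'] using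
                fun hle => hsne (le_antisymm hle (hs0 i))
            simp [hgdef, hi, inv_mul_cancel₀ hne]
        rw [hfun]
      have h2 : (X * W) * Matrix.diagonal (fun i => if μ i = 0 then (0 : ℝ) else 1) = X * W := by
        ext k r
        rw [Matrix.mul_diagonal]
        by_cases hr : μ r = 0
        · simp [hr, colzero r hr k]
        · simp [hr]
      rw [Matrix.transpose_mul, Matrix.diagonal_transpose]
      calc X = X * W * Wᵀ := by rw [Matrix.mul_assoc, hW2, Matrix.mul_one]
        _ = X * W * Matrix.diagonal (fun i => if μ i = 0 then (0 : ℝ) else 1) * Wᵀ := by rw [h2]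
        _ = X * W * Matrix.diagonal g *
              (Matrix.diagonal (fun i => Real.sqrt (s i)) * Wᵀ) := by
            rw [← hd]; simp only [Matrix.mul_assoc]
    · -- value
      have hU : ∑ i, ∑ r, ((X * W) * Matrix.diagonal g) i r ^ 2 = ∑ i, s i := by
        rw [Finset.sum_comm]
        refine Finset.sum_congr rfl fun r _ => ?_
        have : ∑ i, ((X * W) * Matrix.diagonal g) i r ^ 2 = g r ^ 2 * ∑ i, (X * W) i r ^ 2 := by
          rw [Finset.mul_sum]
          refine Finset.sum_congr rfl fun i _ => ?_
          rw [Matrix.mul_diagonal]; ring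
        rw [this, colnorm r]
        by_cases hr : μ r = 0
        · simp [hgdef, hr, hsdef]
        · have hsne : s r ≠ 0 := by
            intro hc; apply hr; rw [← hssq r, hc]; ring
          have hsq : Real.sqrt (s r) ^ 2 = s r := Real.sq_sqrt (hs0 r)
          have : g r ^ 2 = (s r)⁻¹ := by
            rw [hgdef]; simp only [hr, if_false]
            rw [inv_pow, hsq]
          rw [this, ← hssq r]
          field_simp
      have hV : ∑ j, ∑ r, (W * Matrix.diagonal (fun i => Real.sqrt (s i))) j r ^ 2
          = ∑ i, s i := by
        rw [Finset.sum_comm]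
        refine Finset.sum_congr rfl fun r _ => ?_
        have hcol : ∑ j, W j r ^ 2 = 1 := by
          have := congrFun (congrFun hW1 r) r
          simpa [Matrix.mul_apply, Matrix.one_apply, sq] using this
        have : ∑ j, (W * Matrix.diagonal (fun i => Real.sqrt (s i))) j r ^ 2
            = Real.sqrt (s r) ^ 2 * ∑ j, W j r ^ 2 := by
          rw [Finset.mul_sum]
          refine Finset.sum_congr rfl fun j _ => ?_
          rw [Matrix.mul_diagonal]; ring
        rw [this, hcol, Real.sq_sqrt (hs0 r), mul_one]
      rw [hU, hV, hnn]; ring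
  · -- lower bound
    rintro c ⟨R, U, V, -, hXUV, rfl⟩
    set e : Fin m₂ → ℝ := fun i => if μ i = 0 then 0 else (s i)⁻¹ with hedef
    set Y : Matrix (Fin m₁) (Fin m₂) ℝ := (X * W) * Matrix.diagonal e with hYdef
    have hsne : ∀ i, μ i ≠ 0 → s i ≠ 0 := by
      intro i hi hc; apply hi; rw [← hssq i, hc]; ring
    have hYM : Yᵀ * (X * W) = Matrix.diagonal s := by
      rw [hYdef, Matrix.transpose_mul, Matrix.diagonal_transpose, Matrix.mul_assoc, key,
        Matrix.diagonal_mul_diagonal]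
      have hfun : (fun i => e i * μ i) = s := by
        funext i
        by_cases hi : μ i = 0
        · simp [hedef, hi, hsdef]
        · rw [hedef]; simp only [hi, if_false]
          rw [← hssq i]
          field_simp [hsne i hi]
      rw [hfun]
    have hYY : Yᵀ * Y = Matrix.diagonal (fun i => if μ i = 0 then (0 : ℝ) else 1) := by
      rw [hYdef, Matrix.transpose_mul, Matrix.diagonal_transpose, Matrix.mul_assoc,
        ← Matrix.mul_assoc ((X * W)ᵀ), key, Matrix.diagonal_mul_diagonal,
        Matrix.diagonal_mul_diagonal]
      have hfun : (fun i => e i * (μ i * e i)) =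
          (fun i => if μ i = 0 then (0 : ℝ) else 1) := by
        funext i
        by_cases hi : μ i = 0
        · simp [hedef, hi]
        · rw [hedef]; simp only [hi, if_false]
          rw [← hssq i]
          field_simp [hsne i hi]
      rw [hfun]
    have hY0 : ∀ i, μ i = 0 → ∀ k, Y k i = 0 := by
      intro i hi k
      rw [hYdef, Matrix.mul_diagonal, hedef]
      simp [hi]
    have hYd : Y * Matrix.diagonal (fun i => if μ i = 0 then (0 : ℝ) else 1) = Y := by
      ext k i
      rw [Matrix.mul_diagonal]
      by_cases hi : μ i = 0
      · simp [hi, hY0 i hi k]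
      · simp [hi]
    set P : Matrix (Fin m₁) (Fin m₁) ℝ := Y * Yᵀ with hPdef
    have hPT : Pᵀ = P := by rw [hPdef, Matrix.transpose_mul, Matrix.transpose_transpose]
    have hPP : P * P = P := by
      rw [hPdef]
      calc Y * Yᵀ * (Y * Yᵀ) = Y * (Yᵀ * Y) * Yᵀ := by simp only [Matrix.mul_assoc]
        _ = Y * Yᵀ := by rw [hYY, hYd]
    -- ∑ s = trace of (Uᵀ Y)ᵀ (Vᵀ W)
    have e1 : ∑ i, s i = ((Uᵀ * Y)ᵀ * (Vᵀ * W)).trace := by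
      have : (Uᵀ * Y)ᵀ * (Vᵀ * W) = Yᵀ * (X * W) := by
        rw [Matrix.transpose_mul, Matrix.transpose_transpose, hXUV]
        simp only [Matrix.mul_assoc]
      rw [this, hYM, Matrix.trace_diagonal]
    -- entrywise AM-GM
    have e2 : ((Uᵀ * Y)ᵀ * (Vᵀ * W)).trace ≤
        (1 / 2) * (((Uᵀ * Y)ᵀ * (Uᵀ * Y)).trace + ((Vᵀ * W)ᵀ * (Vᵀ * W)).trace) := by
      rw [traceAux, traceSq, traceSq]
      rw [← Finset.sum_add_distrib, Finset.mul_sum]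
      refine Finset.sum_le_sum fun r _ => ?_
      rw [← Finset.sum_add_distrib, Finset.mul_sum]
      refine Finset.sum_le_sum fun i _ => ?_
      nlinarith [sq_nonneg ((Uᵀ * Y) r i - (Vᵀ * W) r i)]
    -- bound the U part
    have e3 : ((Uᵀ * Y)ᵀ * (Uᵀ * Y)).trace ≤ (Uᵀ * U).trace := by
      have h1 : ((Uᵀ * Y)ᵀ * (Uᵀ * Y)).trace = (U * Uᵀ * P).trace := by
        rw [Matrix.transpose_mul, Matrix.transpose_transpose]
        calc (Yᵀ * U * (Uᵀ * Y)).trace = (Yᵀ * (U * Uᵀ * Y)).trace := by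
              simp only [Matrix.mul_assoc]
          _ = ((U * Uᵀ * Y) * Yᵀ).trace := Matrix.trace_mul_comm _ _
          _ = (U * Uᵀ * P).trace := by rw [hPdef, Matrix.mul_assoc]
      set Q : Matrix (Fin m₁) (Fin m₁) ℝ := 1 - P with hQdef
      have hQT : Qᵀ = Q := by rw [hQdef, Matrix.transpose_sub, Matrix.transpose_one, hPT]
      have hQQ : Q * Q = Q := by
        rw [hQdef, Matrix.sub_mul, Matrix.mul_sub, Matrix.mul_sub, hPP]
        simp
      have h2 : (0 : ℝ) ≤ (U * Uᵀ * Q).trace := by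
        have h3 : ((Uᵀ * Q)ᵀ * (Uᵀ * Q)).trace = (U * Uᵀ * Q).trace := by
          rw [Matrix.transpose_mul, Matrix.transpose_transpose, hQT]
          calc (Q * U * (Uᵀ * Q)).trace = (Q * (U * Uᵀ * Q)).trace := by
                simp only [Matrix.mul_assoc]
            _ = ((U * Uᵀ * Q) * Q).trace := Matrix.trace_mul_comm _ _
            _ = (U * Uᵀ * Q).trace := by rw [Matrix.mul_assoc, hQQ]
        rw [← h3]; exact traceSqNonneg _
      have h4 : (U * Uᵀ * Q).trace = (U * Uᵀ).trace - (U * Uᵀ * P).trace := by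
        rw [hQdef, Matrix.mul_sub, Matrix.mul_one, Matrix.trace_sub]
      have h5 : (Uᵀ * U).trace = (U * Uᵀ).trace := Matrix.trace_mul_comm _ _
      rw [h1, h5]; linarith
    -- the V part
    have e4 : ((Vᵀ * W)ᵀ * (Vᵀ * W)).trace = (Vᵀ * V).trace := by
      rw [Matrix.transpose_mul, Matrix.transpose_transpose]
      calc (Wᵀ * V * (Vᵀ * W)).trace = (Wᵀ * (V * Vᵀ * W)).trace := by
            simp only [Matrix.mul_assoc]
        _ = ((V * Vᵀ * W) * Wᵀ).trace := Matrix.trace_mul_comm _ _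
        _ = (V * Vᵀ).trace := by rw [Matrix.mul_assoc, hW2, Matrix.mul_one]
        _ = (Vᵀ * V).trace := (Matrix.trace_mul_comm _ _).symm
    have hUF : (Uᵀ * U).trace = ∑ i, ∑ r, U i r ^ 2 := traceSq U
    have hVF : (Vᵀ * V).trace = ∑ j, ∑ r, V j r ^ 2 := traceSq V
    rw [hnn]
    calc ∑ i, s i ≤ (1 / 2) * (((Uᵀ * Y)ᵀ * (Uᵀ * Y)).trace + ((Vᵀ * W)ᵀ * (Vᵀ * W)).trace) := by
          rw [e1]; exact e2
      _ ≤ (1 / 2) * ((∑ i, ∑ r, U i r ^ 2) + ∑ j, ∑ r, V j r ^ 2) := by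
          rw [← hUF, ← hVF, ← e4]; linarith
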